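/- arXiv:0910.3569 — 3 statements merged into one kernel-verified Lean document; each statement's English description precedes it below -/
import Mathlib

section
/- Let k be an algebraically closed field of characteristic zero, let d, s ∈ ℕ, let I ⊆ k[x_0,…,x_n] be a homogeneous ideal, and let W ⊆ k^{n+1} be a nonzero linear subspace with vanishing ideal J = I(W). If dim (I)_d = s and dim (I ∩ J)_d = 0, then there exist s one-dimensional linear subspaces P_1,…,P_s ⊆ W (points of the projective linear space corresponding to W) such that dim (I ∩ I(P_1) ∩ ⋯ ∩ I(P_s))_d = 0. -/
open MvPolynomial

noncomputable def vanIdeal (k : Type) [Field k] (N : ℕ) (V : Set (Fin N → k)) :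
    Ideal (MvPolynomial (Fin N) k) where
  carrier := {f | ∀ v ∈ V, MvPolynomial.eval v f = 0}
  add_mem' := by
    intro f g hf hg v hv
    simp only [Set.mem_setOf_eq] at *
    simp [map_add, hf v hv, hg v hv]
  zero_mem' := by
    intro v hv
    simp
  smul_mem' := by
    intro c f hf v hv
    simp only [Set.mem_setOf_eq] at *
    simp [smul_eq_mul, hf v hv]

noncomputable def hdim (k : Type) [Field k] (N : ℕ)
    (I : Ideal (MvPolynomial (Fin N) k)) (d : ℕ) : ℕ :=
  Module.finrank k
    ↥(Submodule.restrictScalars k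
        (I : Submodule (MvPolynomial (Fin N) k) (MvPolynomial (Fin N) k))
      ⊓ MvPolynomial.homogeneousSubmodule (Fin N) k d)

section Aux

variable {k : Type} [Field k] {N d : ℕ}

/-- degree-d part of an ideal -/
noncomputable def hpart (I : Ideal (MvPolynomial (Fin N) k)) (d : ℕ) :
    Submodule k (MvPolynomial (Fin N) k) :=
  Submodule.restrictScalars k
      (I : Submodule (MvPolynomial (Fin N) k) (MvPolynomial (Fin N) k))
    ⊓ MvPolynomial.homogeneousSubmodule (Fin N) k d

lemma mem_hpart {I : Ideal (MvPolynomial (Fin N) k)} {f : MvPolynomial (Fin N) k} :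
    f ∈ hpart I d ↔ f ∈ I ∧ f ∈ MvPolynomial.homogeneousSubmodule (Fin N) k d := Iff.rfl

lemma hdim_eq (I : Ideal (MvPolynomial (Fin N) k)) (d : ℕ) :
    hdim k N I d = Module.finrank k (hpart I d) := rfl

lemma hpart_le_hom (I : Ideal (MvPolynomial (Fin N) k)) :
    hpart I d ≤ MvPolynomial.homogeneousSubmodule (Fin N) k d := inf_le_right

instance : FiniteDimensional k (MvPolynomial.homogeneousSubmodule (Fin N) k d) := by
  have hle : MvPolynomial.homogeneousSubmodule (Fin N) k d ≤
      MvPolynomial.restrictTotalDegree (Fin N) k d := by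
    intro f hf
    rw [MvPolynomial.mem_restrictTotalDegree]
    exact ((MvPolynomial.mem_homogeneousSubmodule _ _).mp hf).totalDegree_le
  exact Submodule.finiteDimensional_of_le hle

instance (I : Ideal (MvPolynomial (Fin N) k)) : FiniteDimensional k (hpart I d) :=
  Submodule.finiteDimensional_of_le (hpart_le_hom I)

lemma hdim_zero_iff (I : Ideal (MvPolynomial (Fin N) k)) :
    hdim k N I d = 0 ↔ hpart I d = ⊥ := by
  rw [hdim_eq]
  exact Submodule.finrank_eq_zero

lemma hpart_mono {I J : Ideal (MvPolynomial (Fin N) k)} (h : I ≤ J) :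
    hpart I d ≤ hpart (d := d) J := by
  intro f hf
  exact ⟨h hf.1, hf.2⟩

lemma mem_vanIdeal_iff {V : Set (Fin N → k)} {f : MvPolynomial (Fin N) k} :
    f ∈ vanIdeal k N V ↔ ∀ v ∈ V, MvPolynomial.eval v f = 0 := Iff.rfl

lemma key (k : Type) [Field k] (N dd : ℕ) (I : Ideal (MvPolynomial (Fin N) k))
    (W : Submodule k (Fin N → k)) (hW : W ≠ ⊥)
    (h2 : hdim k N (I ⊓ vanIdeal k N ↑W) dd = 0) :
    ∀ m (I' : Ideal (MvPolynomial (Fin N) k)), I' ≤ I → hdim k N I' dd ≤ m →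
    ∃ P : Fin m → Submodule k (Fin N → k),
      (∀ i, Module.finrank k (P i) = 1 ∧ P i ≤ W) ∧
      hdim k N (I' ⊓ ⨅ i, vanIdeal k N ↑(P i)) dd = 0 := by
  obtain ⟨w0, hw0W, hw0⟩ := (Submodule.ne_bot_iff W).mp hW
  intro m
  induction m with
  | zero =>
    intro I' hle hd
    refine ⟨fun i => i.elim0, fun i => i.elim0, ?_⟩
    rw [hdim_zero_iff] at *
    rw [Nat.le_zero, hdim_zero_iff] at hd
    rw [← le_bot_iff, ← hd]
    exact hpart_mono inf_le_left
  | succ m ih =>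
    intro I' hle hd
    by_cases hz : hpart (d := dd) I' = ⊥
    · -- already zero: pick constant points
      refine ⟨fun _ => Submodule.span k {w0},
        fun i => ⟨finrank_span_singleton hw0, ?_⟩, ?_⟩
      · rw [Submodule.span_singleton_le_iff_mem]; exact hw0W
      · rw [hdim_zero_iff, ← le_bot_iff, ← hz]
        exact hpart_mono inf_le_left
    · -- pick a nonzero homogeneous f in I'
      obtain ⟨f, hf, hf0⟩ := (Submodule.ne_bot_iff _).mp hz
      obtain ⟨hfI', hfhom⟩ := mem_hpart.mp hf
      -- f does not vanish on all of W
      have hnv : ¬ f ∈ vanIdeal k N (↑W : Set (Fin N → k)) := by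
        intro hfv
        rw [hdim_zero_iff] at h2
        exact hf0 ((Submodule.eq_bot_iff _).mp h2 f
          (mem_hpart.mpr ⟨⟨hle hfI', hfv⟩, hfhom⟩))
      rw [mem_vanIdeal_iff] at hnv
      push_neg at hnv
      obtain ⟨w, hwW, hw⟩ := hnv
      obtain ⟨wp, hwpW, hwpne, hwmem⟩ :
          ∃ wp, wp ∈ W ∧ wp ≠ 0 ∧ w ∈ Submodule.span k {wp} := by
        rcases eq_or_ne w 0 with rfl | hwz
        · exact ⟨w0, hw0W, hw0, Submodule.zero_mem _⟩
        · exact ⟨w, hwW, hwz, Submodule.mem_span_singleton_self w⟩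
      set I'' : Ideal (MvPolynomial (Fin N) k) :=
        I' ⊓ vanIdeal k N (↑(Submodule.span k {wp}) : Set (Fin N → k)) with hI''
      -- strict decrease
      have hlt : hpart (d := dd) I'' < hpart (d := dd) I' := by
        refine lt_of_le_of_ne (hpart_mono inf_le_left) fun heq => ?_
        have : f ∈ hpart (d := dd) I'' := heq ▸ hf
        exact hw ((mem_hpart.mp this).1.2 w hwmem)
      have hd'' : hdim k N I'' dd ≤ m := by
        have := Submodule.finrank_lt_finrank_of_lt hlt
        rw [hdim_eq] at *
        omega
      obtain ⟨P, hP, hP0⟩ := ih I'' (inf_le_left.trans hle) hd''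
      set Q : Fin (m+1) → Submodule k (Fin N → k) :=
        Fin.cons (Submodule.span k {wp}) P with hQ
      refine ⟨Q, ?_, ?_⟩
      · intro i
        refine Fin.cases ?_ (fun j => ?_) i
        · simp only [hQ, Fin.cons_zero]
          exact ⟨finrank_span_singleton hwpne,
            (Submodule.span_singleton_le_iff_mem _ _).mpr hwpW⟩
        · simp only [hQ, Fin.cons_succ]
          exact hP j
      · have hiInf : (⨅ i : Fin (m+1), vanIdeal k N (↑(Q i) : Set (Fin N → k)))
            = vanIdeal k N (↑(Submodule.span k {wp}) : Set (Fin N → k)) ⊓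
              ⨅ i : Fin m, vanIdeal k N (↑(P i) : Set (Fin N → k)) := by
          apply le_antisymm
          · refine le_inf ?_ (le_iInf fun j => ?_)
            · have := iInf_le (fun i : Fin (m+1) =>
                vanIdeal k N (↑(Q i) : Set (Fin N → k))) 0
              simpa [hQ] using this
            · have := iInf_le (fun i : Fin (m+1) =>
                vanIdeal k N (↑(Q i) : Set (Fin N → k))) j.succ
              simpa [hQ] using this
          · refine le_iInf fun i => ?_
            refine Fin.cases ?_ (fun j => ?_) i
            · simpa [hQ] using inf_le_left
            · simp only [hQ, Fin.cons_succ]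
              exact inf_le_right.trans (iInf_le _ j)
        rw [hiInf, ← inf_assoc]
        exact hP0

end Aux

/-- Adding to a scheme generic points on a linear space `W` imposes independent
conditions on the degree-`d` part of a homogeneous ideal `I`, provided
`dim (I)_d = s` and `dim (I ∩ I(W))_d = 0`. -/
theorem stmt3 (k : Type) [Field k] [IsAlgClosed k] [CharZero k]
    (n d s : ℕ) (I : Ideal (MvPolynomial (Fin (n+1)) k))
    (hIhom : ∀ f ∈ I, ∀ e : ℕ, MvPolynomial.homogeneousComponent e f ∈ I)
    (W : Submodule k (Fin (n+1) → k)) (hW : W ≠ ⊥)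
    (h1 : hdim k (n+1) I d = s)
    (h2 : hdim k (n+1) (I ⊓ vanIdeal k (n+1) ↑W) d = 0) :
    ∃ P : Fin s → Submodule k (Fin (n+1) → k),
      (∀ i, Module.finrank k (P i) = 1 ∧ P i ≤ W) ∧
      hdim k (n+1) (I ⊓ ⨅ i, vanIdeal k (n+1) ↑(P i)) d = 0 := by
  exact key k (n+1) d I W hW h2 s I le_rfl h1.le
end

section
/- Let k be a field and n ≥ m+2 ≥ 3. Set J = (x_{m+3},…,x_n) ⊆ k[x_0,…,x_n]. Then (x_1,…,x_{m+1})·(x_{m+1},x_{m+2}) + J = ((x_1,…,x_{m+1}) + J) ∩ ((x_{m+1},x_{m+2}) + J) ∩ ((x_1,…,x_{m+2})^2 + J). (The three ideals on the right are, respectively, the ideal of a line L through the point P = [1:0:⋯:0], the ideal of an m-plane Π meeting L exactly in P, and the ideal of the double point 2P restricted to the linear span of L and Π; so the left-hand side is the ideal of the (m+2)-dimensional sundial L + Π + 2P|_{<L,Π>}.) -/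
open MvPolynomial

section Aux

variable {σ R : Type*} [CommSemiring R]

lemma aux_span_mul (S T : Set (σ →₀ ℕ)) :
    Ideal.span ((fun e => monomial e (1:R)) '' S) * Ideal.span ((fun e => monomial e (1:R)) '' T)
      = Ideal.span ((fun e => monomial e (1:R)) '' (Set.image2 (· + ·) S T)) := by
  rw [Ideal.span_mul_span']
  congr 1
  rw [← Set.image2_mul, Set.image2_image_left, Set.image2_image_right, Set.image_image2]
  simp [monomial_mul]

lemma aux_spanX (s : Set σ) :
    (Ideal.span (MvPolynomial.X '' s) : Ideal (MvPolynomial σ R))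
      = Ideal.span ((fun e => monomial e (1:R)) '' ((fun i => Finsupp.single i 1) '' s)) := by
  rw [Set.image_image]
  rfl

lemma aux_span_add (S T : Set (σ →₀ ℕ)) :
    Ideal.span ((fun e => monomial e (1:R)) '' S) + Ideal.span ((fun e => monomial e (1:R)) '' T)
      = Ideal.span ((fun e => monomial e (1:R)) '' (S ∪ T)) := by
  rw [Set.image_union, Ideal.span_union, Ideal.add_eq_sup]

lemma aux_le_ne {i j : σ} {d : σ →₀ ℕ} (hij : i ≠ j) (hi : 1 ≤ d i) (hj : 1 ≤ d j) :
    Finsupp.single i 1 + Finsupp.single j 1 ≤ d := by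
  rw [Finsupp.le_def]
  intro a
  simp only [Finsupp.add_apply]
  rcases eq_or_ne a i with rfl | h1
  · rw [Finsupp.single_eq_same, Finsupp.single_eq_of_ne hij]; omega
  · rw [Finsupp.single_eq_of_ne h1]
    rcases eq_or_ne a j with rfl | h2
    · rw [Finsupp.single_eq_same]; omega
    · rw [Finsupp.single_eq_of_ne h2]; omega

lemma aux_le_eq {i : σ} {d : σ →₀ ℕ} (hi : 2 ≤ d i) :
    Finsupp.single i 1 + Finsupp.single i 1 ≤ d := by
  rw [Finsupp.le_def]
  intro a
  simp only [Finsupp.add_apply]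
  rcases eq_or_ne a i with rfl | h1
  · rw [Finsupp.single_eq_same]; omega
  · rw [Finsupp.single_eq_of_ne h1]; omega

lemma aux_le_elim {i j : σ} {d : σ →₀ ℕ}
    (h : Finsupp.single i 1 + Finsupp.single j 1 ≤ d) : 1 ≤ d i ∧ 1 ≤ d j := by
  rw [Finsupp.le_def] at h
  constructor
  · have := h i
    simp only [Finsupp.add_apply, Finsupp.single_eq_same] at this
    omega
  · have := h j
    simp only [Finsupp.add_apply, Finsupp.single_eq_same] at this
    omega

lemma aux_le_elim2 {i : σ} {d : σ →₀ ℕ}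
    (h : Finsupp.single i 1 + Finsupp.single i 1 ≤ d) : 2 ≤ d i := by
  rw [Finsupp.le_def] at h
  have := h i
  simp only [Finsupp.add_apply, Finsupp.single_eq_same] at this
  omega

end Aux

/-- The ideal of the `(m+2)`-dimensional sundial decomposes as the intersection of
the ideal of a line, the ideal of an `m`-plane, and the ideal of a double point
restricted to their span. -/
theorem stmt5 (k : Type) [Field k] (n m : ℕ) (hm : 1 ≤ m) (hn : m + 2 ≤ n) :
    (Ideal.span (MvPolynomial.X '' {i : Fin (n+1) | 1 ≤ (i : ℕ) ∧ (i : ℕ) ≤ m + 1})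
          : Ideal (MvPolynomial (Fin (n+1)) k))
        * Ideal.span {MvPolynomial.X (⟨m+1, by omega⟩ : Fin (n+1)),
            MvPolynomial.X (⟨m+2, by omega⟩ : Fin (n+1))}
      + Ideal.span (MvPolynomial.X '' {i : Fin (n+1) | m + 3 ≤ (i : ℕ)})
    = (Ideal.span (MvPolynomial.X '' {i : Fin (n+1) | 1 ≤ (i : ℕ) ∧ (i : ℕ) ≤ m + 1})
        + Ideal.span (MvPolynomial.X '' {i : Fin (n+1) | m + 3 ≤ (i : ℕ)}))
      ⊓ (Ideal.span {MvPolynomial.X (⟨m+1, by omega⟩ : Fin (n+1)),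
            MvPolynomial.X (⟨m+2, by omega⟩ : Fin (n+1))}
        + Ideal.span (MvPolynomial.X '' {i : Fin (n+1) | m + 3 ≤ (i : ℕ)}))
      ⊓ ((Ideal.span (MvPolynomial.X '' {i : Fin (n+1) | 1 ≤ (i : ℕ) ∧ (i : ℕ) ≤ m + 2})) ^ 2
        + Ideal.span (MvPolynomial.X '' {i : Fin (n+1) | m + 3 ≤ (i : ℕ)})) := by
  set i1 : Fin (n+1) := ⟨m+1, by omega⟩ with hi1
  set i2 : Fin (n+1) := ⟨m+2, by omega⟩ with hi2
  have v1 : (i1 : ℕ) = m+1 := rfl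
  have v2 : (i2 : ℕ) = m+2 := rfl
  have hpair : ({MvPolynomial.X i1, MvPolynomial.X i2} : Set (MvPolynomial (Fin (n+1)) k))
      = MvPolynomial.X '' {i1, i2} := (Set.image_pair _ _ _).symm
  rw [hpair, sq]
  rw [aux_spanX (R := k) {i : Fin (n+1) | 1 ≤ (i : ℕ) ∧ (i : ℕ) ≤ m + 1},
      aux_spanX (R := k) {i : Fin (n+1) | m + 3 ≤ (i : ℕ)},
      aux_spanX (R := k) {i : Fin (n+1) | 1 ≤ (i : ℕ) ∧ (i : ℕ) ≤ m + 2},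
      aux_spanX (R := k) ({i1, i2} : Set (Fin (n+1))),
      aux_span_mul, aux_span_mul, aux_span_add, aux_span_add, aux_span_add, aux_span_add]
  set SA : Set (Fin (n+1) →₀ ℕ) :=
    (fun i => Finsupp.single i 1) '' {i : Fin (n+1) | 1 ≤ (i : ℕ) ∧ (i : ℕ) ≤ m + 1} with hSA
  set SB : Set (Fin (n+1) →₀ ℕ) := (fun i => Finsupp.single i 1) '' {i1, i2} with hSB
  set SC : Set (Fin (n+1) →₀ ℕ) :=
    (fun i => Finsupp.single i 1) '' {i : Fin (n+1) | 1 ≤ (i : ℕ) ∧ (i : ℕ) ≤ m + 2} with hSC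
  set SJ : Set (Fin (n+1) →₀ ℕ) :=
    (fun i => Finsupp.single i 1) '' {i : Fin (n+1) | m + 3 ≤ (i : ℕ)} with hSJ
  ext f
  simp only [Ideal.mem_inf, mem_ideal_span_monomial_image]
  constructor
  · intro h
    refine ⟨⟨fun d hd => ?_, fun d hd => ?_⟩, fun d hd => ?_⟩ <;>
      obtain ⟨e, he, hle⟩ := h d hd
    · rcases he with he | he
      · obtain ⟨a, ha, b, hb, rfl⟩ := he
        exact ⟨a, Or.inl ha, le_trans (le_add_right le_rfl) hle⟩
      · exact ⟨e, Or.inr he, hle⟩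
    · rcases he with he | he
      · obtain ⟨a, ha, b, hb, rfl⟩ := he
        exact ⟨b, Or.inl hb, le_trans (le_add_left le_rfl) hle⟩
      · exact ⟨e, Or.inr he, hle⟩
    · rcases he with he | he
      · obtain ⟨a, ha, b, hb, rfl⟩ := he
        obtain ⟨a', ha', rfl⟩ := ha
        obtain ⟨b', hb', rfl⟩ := hb
        refine ⟨_, Or.inl ⟨_, ⟨a', ⟨ha'.1, ha'.2.trans (Nat.le_succ _)⟩, rfl⟩, _, ⟨b', ?_, rfl⟩, rfl⟩, hle⟩
        rcases hb' with rfl | rfl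
        · exact (show (1:ℕ) ≤ m+1 ∧ m+1 ≤ m+2 by omega)
        · exact (show (1:ℕ) ≤ m+2 ∧ m+2 ≤ m+2 by omega)
      · exact ⟨e, Or.inr he, hle⟩
  · rintro ⟨⟨h1, h2⟩, h3⟩ d hd
    obtain ⟨e1, he1, hle1⟩ := h1 d hd
    obtain ⟨e2, he2, hle2⟩ := h2 d hd
    rcases he1 with he1 | he1
    swap
    · exact ⟨e1, Or.inr he1, hle1⟩
    rcases he2 with he2 | he2
    swap
    · exact ⟨e2, Or.inr he2, hle2⟩
    obtain ⟨a, ha, rfl⟩ := he1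
    obtain ⟨b, hb, rfl⟩ := he2
    rw [Finsupp.single_le_iff] at hle1 hle2
    have hda : 1 ≤ d a := hle1
    -- helper to produce witnesses
    have mk : ∀ (x y : Fin (n+1)), 1 ≤ (x:ℕ) → (x:ℕ) ≤ m+1 → (y = i1 ∨ y = i2) →
        Finsupp.single x 1 + Finsupp.single y 1 ≤ d →
        ∃ e ∈ Set.image2 (· + ·) SA SB ∪ SJ, e ≤ d := by
      intro x y hx1 hx2 hy hled
      exact ⟨_, Or.inl ⟨_, ⟨x, ⟨hx1, hx2⟩, rfl⟩, _, ⟨y, by rcases hy with rfl | rfl <;> simp, rfl⟩,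
        rfl⟩, hled⟩
    rcases hb with rfl | rfl
    · -- b = i1, d i1 ≥ 1
      by_cases hai : a = i1
      · subst hai
        -- need h3
        obtain ⟨e3, he3, hle3⟩ := h3 d hd
        rcases he3 with he3 | he3
        swap
        · exact ⟨e3, Or.inr he3, hle3⟩
        obtain ⟨c0, ⟨cc, hcc, rfl⟩, c0', ⟨cc', hcc', rfl⟩, rfl⟩ := he3
        simp only [Set.mem_setOf_eq] at hcc hcc'
        have hc := aux_le_elim hle3
        by_cases hd2 : 1 ≤ d i2
        · exact mk i1 i2 (by rw [v1]; omega) (le_of_eq v1) (Or.inr rfl)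
            (aux_le_ne (by rw [Ne, Fin.ext_iff, v1, v2]; omega) hle1 hd2)
        · -- d i2 = 0, so cc, cc' ≠ i2
          have hcne : (cc:ℕ) ≠ m+2 := by
            intro hcv
            have : cc = i2 := Fin.ext (by rw [v2, hcv])
            rw [this] at hc; omega
          have hcne' : (cc':ℕ) ≠ m+2 := by
            intro hcv
            have : cc' = i2 := Fin.ext (by rw [v2, hcv])
            rw [this] at hc; omega
          by_cases hcm : (cc:ℕ) ≤ m
          · exact mk cc i1 hcc.1 (by omega) (Or.inl rfl)
              (aux_le_ne (by rw [Ne, Fin.ext_iff, v1]; omega) hc.1 hle1)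
          · by_cases hcm' : (cc':ℕ) ≤ m
            · exact mk cc' i1 hcc'.1 (by omega) (Or.inl rfl)
                (aux_le_ne (by rw [Ne, Fin.ext_iff, v1]; omega) hc.2 hle1)
            · -- cc = cc' = i1, so d i1 ≥ 2
              have hcc1 : cc = i1 := Fin.ext (by rw [v1]; omega)
              have hcc1' : cc' = i1 := Fin.ext (by rw [v1]; omega)
              subst hcc1; subst hcc1'
              have : 2 ≤ d i1 := aux_le_elim2 hle3
              exact mk i1 i1 (by rw [v1]; omega) (le_of_eq v1) (Or.inl rfl)
                (aux_le_eq this)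
      · exact mk a i1 ha.1 ha.2 (Or.inl rfl) (aux_le_ne hai hda hle2)
    · -- b = i2
      have hne : a ≠ i2 := by
        intro hh
        have h2' := ha.2
        rw [hh, v2] at h2'
        omega
      exact mk a i2 ha.1 ha.2 (Or.inr rfl) (aux_le_ne hne hda hle2)
end

section
/- Let k be a field, n ≥ m+2 ≥ 3, and let I_{X_0} = (x_1,…,x_{m+1})·(x_{m+1},x_{m+2}) + (x_{m+3},…,x_n) ⊆ R = k[x_0,…,x_n] be the ideal of the (m+2)-dimensional sundial. Then for every integer d ≥ 1 one has dim_k (R/I_{X_0})_d = C(d+m,m) + d + 1; equivalently dim_k (I_{X_0})_d = C(d+n,n) − C(d+m,m) − (d+1). (Thus the sundial, being a flat degeneration of the disjoint union of a line and an m-plane, imposes the same number of conditions on forms of each degree d ≥ 1 as that disjoint union; for m = 1 this number is 2d+2.) -/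
open MvPolynomial

open Pointwise


lemma count_degree (α : Type) [Finite α] (d : ℕ) :
    Nat.card {σ : α →₀ ℕ // Finsupp.degree σ = d} = (Nat.card α + d - 1).choose d := by
  classical
  haveI := Fintype.ofFinite α
  have hdeg : ∀ f : α →₀ ℕ, f.degree = f.sum fun _ => id := fun f => rfl
  have e : {σ : α →₀ ℕ // Finsupp.degree σ = d} ≃ Sym α d :=
  { toFun := fun σ => ⟨Finsupp.toMultiset σ.1, by
      rw [Finsupp.card_toMultiset, ← hdeg]; exact σ.2⟩
    invFun := fun s => ⟨Multiset.toFinsupp s.1, by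
      rw [hdeg, Multiset.toFinsupp_sum_eq]; exact s.2⟩
    left_inv := fun σ => Subtype.ext (Finsupp.toMultiset_toFinsupp σ.1)
    right_inv := fun s => Subtype.ext (Multiset.toFinsupp_toMultiset s.1) }
  rw [Nat.card_congr e, Nat.card_eq_fintype_card, Sym.card_sym_eq_choose,
    Nat.card_eq_fintype_card]

lemma count_supported (N mm d : ℕ) (s0 : Set (Fin N)) (hs0 : Nat.card s0 = mm) :
    Nat.card {σ : Fin N →₀ ℕ // σ.degree = d ∧ ↑σ.support ⊆ s0}
      = (mm + d - 1).choose d := by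
  classical
  set F := Finsupp.restrictSupportEquiv s0 ℕ with hF
  have hdegF : ∀ f : {f : Fin N →₀ ℕ // ↑f.support ⊆ s0}, (F f).degree = f.1.degree := by
    intro f
    show (Finsupp.subtypeDomain (· ∈ s0) f.1).degree = f.1.degree
    simp only [Finsupp.degree_apply, Finsupp.support_subtypeDomain, Finsupp.subtypeDomain_apply]
    rw [Finset.sum_subtype_eq_sum_filter,
      Finset.filter_true_of_mem (fun i hi => f.2 hi)]
  have e : {σ : Fin N →₀ ℕ // σ.degree = d ∧ ↑σ.support ⊆ s0}
      ≃ {τ : ↥s0 →₀ ℕ // Finsupp.degree τ = d} :=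
  { toFun := fun σ => ⟨F ⟨σ.1, σ.2.2⟩, by rw [hdegF]; exact σ.2.1⟩
    invFun := fun τ => ⟨(F.symm τ.1).1, by
      have h2 := (F.symm τ.1).2
      have h1 : (F (F.symm τ.1)).degree = (F.symm τ.1).1.degree := hdegF _
      rw [F.apply_symm_apply] at h1
      exact ⟨h1 ▸ τ.2, h2⟩⟩
    left_inv := fun σ => by
      apply Subtype.ext
      show ((F.symm (F ⟨σ.1, σ.2.2⟩)) : Fin N →₀ ℕ) = σ.1
      rw [F.symm_apply_apply]
    right_inv := fun τ => by
      apply Subtype.ext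
      show F ⟨(F.symm τ.1).1, (F.symm τ.1).2⟩ = τ.1
      rw [Subtype.coe_eta, F.apply_symm_apply] }
  rw [Nat.card_congr e, count_degree ↥s0 d, hs0]


lemma finrank_supported (k : Type) [Field k] (N : ℕ) (s : Set (Fin N →₀ ℕ)) (hs : s.Finite) :
    Module.finrank k
      ↥(AddMonoidAlgebra.supported k k s : Submodule k (MvPolynomial (Fin N) k)) = s.ncard := by
  classical
  haveI := hs.fintype
  have e : ↥(AddMonoidAlgebra.supported k k s : Submodule k (MvPolynomial (Fin N) k)) ≃ₗ[k] (↥s →₀ k) :=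
    AddMonoidAlgebra.supportedEquivFinsupp s
  rw [LinearEquiv.finrank_eq e, Module.finrank_finsupp_self, ← Nat.card_coe_set_eq,
    Nat.card_eq_fintype_card]

noncomputable def Mo (k : Type) [Field k] (N : ℕ) : (Fin N →₀ ℕ) → MvPolynomial (Fin N) k :=
  fun s => monomial s (1 : k)

lemma image_monomial_mul (k : Type) [Field k] (N : ℕ) (s t : Set (Fin N →₀ ℕ)) :
    (Mo k N '' s) * (Mo k N '' t) = Mo k N '' (s + t) := by
  ext z
  simp only [Set.mem_mul, Set.mem_image, Set.mem_add]
  constructor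
  · rintro ⟨_, ⟨a2, ha, rfl⟩, _, ⟨b2, hb, rfl⟩, rfl⟩
    exact ⟨a2 + b2, ⟨a2, ha, b2, hb, rfl⟩, by simp [Mo, monomial_mul]⟩
  · rintro ⟨_, ⟨a2, ha, b2, hb, rfl⟩, rfl⟩
    exact ⟨Mo k N a2, ⟨a2, ha, rfl⟩, Mo k N b2, ⟨b2, hb, rfl⟩, by simp [Mo, monomial_mul]⟩

def Sgen (n m : ℕ) (a b : Fin (n+1)) : Set (Fin (n+1) →₀ ℕ) :=
  ((fun i => Finsupp.single i 1) '' {i : Fin (n+1) | 1 ≤ (i : ℕ) ∧ (i : ℕ) ≤ m + 1} +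
    {Finsupp.single a 1, Finsupp.single b 1}) ∪
  (fun i => Finsupp.single i 1) '' {i : Fin (n+1) | m + 3 ≤ (i : ℕ)}

lemma ideal_repr (k : Type) [Field k] (n m : ℕ) (a b : Fin (n+1)) :
    (Ideal.span (X '' {i : Fin (n+1) | 1 ≤ (i : ℕ) ∧ (i : ℕ) ≤ m + 1})
        * Ideal.span {X a, X b}
      + Ideal.span (X '' {i : Fin (n+1) | m + 3 ≤ (i : ℕ)})
        : Ideal (MvPolynomial (Fin (n+1)) k))
      = Ideal.span (Mo k (n+1) '' Sgen n m a b) := by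
  have h1 : ∀ U : Set (Fin (n+1)),
      (X '' U : Set (MvPolynomial (Fin (n+1)) k))
        = Mo k (n+1) '' ((fun i => Finsupp.single i 1) '' U) := by
    intro U
    rw [Set.image_image]
    rfl
  have h2 : ({X a, X b} : Set (MvPolynomial (Fin (n+1)) k))
      = Mo k (n+1) '' {Finsupp.single a 1, Finsupp.single b 1} := by
    rw [Set.image_pair]
    rfl
  rw [h1, h1, h2, Ideal.span_mul_span', image_monomial_mul, Sgen, Set.image_union,
    Ideal.span_union]
  rfl

def GoodSet (n m d : ℕ) (a b : Fin (n+1)) : Set (Fin (n+1) →₀ ℕ) :=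
  ({σ : Fin (n+1) →₀ ℕ | σ.degree = d ∧ ↑σ.support ⊆ {i : Fin (n+1) | (i : ℕ) ≤ m}} ∪
    {Finsupp.single 0 (d-1) + Finsupp.single a 1}) ∪
  (fun j => Finsupp.single (0 : Fin (n+1)) (d-j) + Finsupp.single b j) '' Set.Icc 1 d

lemma degree_add' {N : ℕ} (f g : Fin N →₀ ℕ) :
    (f + g).degree = f.degree + g.degree := by
  rw [Finsupp.degree_eq_weight_one]
  exact map_add _ f g

lemma degree_single' {N : ℕ} (i : Fin N) (c : ℕ) : (Finsupp.single i c).degree = c := by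
  classical
  rcases eq_or_ne c 0 with rfl | hc
  · simp [Finsupp.degree_apply]
  · rw [Finsupp.degree_apply, Finsupp.support_single _ hc, Finset.sum_singleton,
      Finsupp.single_eq_same]

section
variable {n m d : ℕ} {a b : Fin (n+1)}

lemma vval (u v : Fin (n+1)) (x y : ℕ) (w : Fin (n+1)) (huv : u ≠ v) :
    (Finsupp.single u x + Finsupp.single v y) w
      = if u = w then x else if v = w then y else 0 := by
  simp only [Finsupp.add_apply, Finsupp.single_apply]
  split_ifs with e1 e2
  · exact absurd (e1.trans e2.symm) huv
  · omega
  · omega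
  · omega

lemma pairle (σ : Fin (n+1) →₀ ℕ) (u v : Fin (n+1)) (x y : ℕ) (huv : u ≠ v) :
    (Finsupp.single u x + Finsupp.single v y ≤ σ) ↔ x ≤ σ u ∧ y ≤ σ v := by
  rw [Finsupp.le_def]
  constructor
  · intro h
    have h1 := h u
    have h2 := h v
    rw [vval u v x y u huv, if_pos rfl] at h1
    rw [vval u v x y v huv, if_neg huv, if_pos rfl] at h2
    exact ⟨h1, h2⟩
  · rintro ⟨h1, h2⟩ w
    rw [vval u v x y w huv]
    split_ifs with e1 e2
    · subst e1; exact h1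
    · subst e2; exact h2
    · exact Nat.zero_le _

lemma memS1 (i : Fin (n+1)) (h1 : 1 ≤ (i:ℕ)) (h2 : (i:ℕ) ≤ m+1)
    (t : Fin (n+1) →₀ ℕ) (ht : t ∈ ({Finsupp.single a 1, Finsupp.single b 1} : Set _)) :
    Finsupp.single i 1 + t ∈ Sgen n m a b :=
  Or.inl (Set.add_mem_add ⟨i, ⟨h1, h2⟩, rfl⟩ ht)

lemma notbad_iff (hm : 1 ≤ m) (hn : m+2 ≤ n) (ha : (a:ℕ) = m+1) (hb : (b:ℕ) = m+2)
    (σ : Fin (n+1) →₀ ℕ) :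
    (¬ ∃ s ∈ Sgen n m a b, s ≤ σ) ↔
      (∀ j : Fin (n+1), m+3 ≤ (j:ℕ) → σ j = 0) ∧ σ a ≤ 1 ∧
      (∀ i : Fin (n+1), 1 ≤ (i:ℕ) → (i:ℕ) ≤ m → σ i = 0 ∨ σ a = 0) ∧
      (∀ i : Fin (n+1), 1 ≤ (i:ℕ) → (i:ℕ) ≤ m+1 → σ i = 0 ∨ σ b = 0) := by
  constructor
  · intro h
    push_neg at h
    refine ⟨?_, ?_, ?_, ?_⟩
    · intro j hj
      have := h (Finsupp.single j 1) (Or.inr ⟨j, hj, rfl⟩)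
      rw [Finsupp.single_le_iff] at this
      omega
    · have := h _ (memS1 a (by omega) (by omega) (Finsupp.single a 1) (Or.inl rfl))
      rw [← Finsupp.single_add, Finsupp.single_le_iff] at this
      omega
    · intro i h1 h2
      have hia : i ≠ a := fun e => by rw [Fin.ext_iff] at e; omega
      have := h _ (memS1 i h1 (by omega) (Finsupp.single a 1) (Or.inl rfl))
      rw [pairle σ i a 1 1 hia] at this
      omega
    · intro i h1 h2
      have hib : i ≠ b := fun e => by rw [Fin.ext_iff] at e; omega
      have := h _ (memS1 i h1 h2 (Finsupp.single b 1) (Or.inr rfl))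
      rw [pairle σ i b 1 1 hib] at this
      omega
  · rintro ⟨C1, C2, C3, C4⟩ ⟨s, hs, hle⟩
    rcases hs with hs | ⟨j, hj, rfl⟩
    · rw [Set.mem_add] at hs
      obtain ⟨x, ⟨i, ⟨hi1, hi2⟩, rfl⟩, y, hy, rfl⟩ := hs
      simp only [Set.mem_insert_iff, Set.mem_singleton_iff] at hy
      rcases hy with rfl | rfl
      · by_cases hia : i = a
        · subst hia
          rw [← Finsupp.single_add, Finsupp.single_le_iff] at hle
          omega
        · rw [pairle σ i a 1 1 hia] at hle
          have him : (i:ℕ) ≤ m := by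
            rcases Nat.lt_or_ge (i:ℕ) (m+1) with hlt | hge
            · omega
            · exact absurd (Fin.ext (by omega : (i:ℕ) = (a:ℕ))) hia
          rcases C3 i hi1 him with h0 | h0 <;> omega
      · have hib : i ≠ b := fun e => by rw [Fin.ext_iff] at e; omega
        rw [pairle σ i b 1 1 hib] at hle
        rcases C4 i hi1 hi2 with h0 | h0 <;> omega
    · rw [Finsupp.single_le_iff] at hle
      have := C1 j hj
      omega

end

section
variable {n m d : ℕ} {a b : Fin (n+1)}

lemma good_sub (hd : 1 ≤ d) (ha : (a:ℕ) = m+1) (hb : (b:ℕ) = m+2) :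
    GoodSet n m d a b ⊆ {σ : Fin (n+1) →₀ ℕ | σ.degree = d} := by
  rintro σ ((⟨h1, _⟩ | rfl) | ⟨j, hj, rfl⟩)
  · exact h1
  · simp only [Set.mem_setOf_eq]
    rw [degree_add', degree_single', degree_single']
    omega
  · rw [Set.mem_Icc] at hj
    simp only [Set.mem_setOf_eq]
    rw [degree_add', degree_single', degree_single']
    omega

lemma bad_eq_diff (hm : 1 ≤ m) (hn : m+2 ≤ n) (hd : 1 ≤ d)
    (ha : (a:ℕ) = m+1) (hb : (b:ℕ) = m+2) :
    {σ : Fin (n+1) →₀ ℕ | σ.degree = d ∧ ∃ s ∈ Sgen n m a b, s ≤ σ}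
      = {σ : Fin (n+1) →₀ ℕ | σ.degree = d} \ GoodSet n m d a b := by
  have h0a : (0 : Fin (n+1)) ≠ a := fun e => by
    rw [Fin.ext_iff] at e; rw [Fin.val_zero] at e; omega
  have h0b : (0 : Fin (n+1)) ≠ b := fun e => by
    rw [Fin.ext_iff] at e; rw [Fin.val_zero] at e; omega
  ext σ
  simp only [Set.mem_diff, Set.mem_setOf_eq]
  constructor
  · rintro ⟨h1, h2⟩
    refine ⟨h1, fun hg => ?_⟩
    refine (notbad_iff hm hn ha hb σ).2 ?_ h2
    rcases hg with (⟨_, hsup⟩ | rfl) | ⟨j, hj, rfl⟩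
    · have hz : ∀ w : Fin (n+1), m+1 ≤ (w:ℕ) → σ w = 0 := by
        intro w hw
        by_contra hzz
        have := hsup (Finsupp.mem_support_iff.2 hzz)
        simp only [Set.mem_setOf_eq] at this
        omega
      exact ⟨fun j hj => hz j (by omega), by rw [hz a (by omega)]; omega,
        fun i _ _ => Or.inr (hz a (by omega)), fun i _ _ => Or.inr (hz b (by omega))⟩
    · refine ⟨?_, ?_, ?_, ?_⟩
      · intro j hj
        rw [vval _ _ _ _ _ h0a, if_neg, if_neg]
        · exact fun e => by rw [Fin.ext_iff] at e; omega
        · exact fun e => by rw [Fin.ext_iff, Fin.val_zero] at e; omega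
      · rw [vval _ _ _ _ _ h0a, if_neg h0a.symm.symm, if_pos rfl]
      · intro i p q
        left
        rw [vval _ _ _ _ _ h0a, if_neg, if_neg]
        · exact fun e => by rw [Fin.ext_iff] at e; omega
        · exact fun e => by rw [Fin.ext_iff, Fin.val_zero] at e; omega
      · intro i p q
        right
        rw [vval _ _ _ _ _ h0a, if_neg, if_neg]
        · exact fun e => by rw [Fin.ext_iff] at e; omega
        · exact fun e => by rw [Fin.ext_iff, Fin.val_zero] at e; omega
    · rw [Set.mem_Icc] at hj
      refine ⟨?_, ?_, ?_, ?_⟩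
      · intro i hi
        rw [vval _ _ _ _ _ h0b, if_neg, if_neg]
        · exact fun e => by rw [Fin.ext_iff] at e; omega
        · exact fun e => by rw [Fin.ext_iff, Fin.val_zero] at e; omega
      · rw [vval _ _ _ _ _ h0b, if_neg, if_neg]
        · omega
        · exact fun e => by rw [Fin.ext_iff] at e; omega
        · exact fun e => by rw [Fin.ext_iff, Fin.val_zero] at e; omega
      · intro i p q
        left
        rw [vval _ _ _ _ _ h0b, if_neg, if_neg]
        · exact fun e => by rw [Fin.ext_iff] at e; omega
        · exact fun e => by rw [Fin.ext_iff, Fin.val_zero] at e; omega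
      · intro i p q
        left
        rw [vval _ _ _ _ _ h0b, if_neg, if_neg]
        · exact fun e => by rw [Fin.ext_iff] at e; omega
        · exact fun e => by rw [Fin.ext_iff, Fin.val_zero] at e; omega
  · rintro ⟨h1, h2⟩
    refine ⟨h1, ?_⟩
    by_contra hnb
    obtain ⟨C1, C2, C3, C4⟩ := (notbad_iff hm hn ha hb σ).1 hnb
    apply h2
    by_cases hza : σ a = 0
    · by_cases hzb : σ b = 0
      · left; left
        refine ⟨h1, fun w hw => ?_⟩
        have hw' : σ w ≠ 0 := by
          rw [Finset.mem_coe, Finsupp.mem_support_iff] at hw; exact hw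
        by_contra hgt
        simp only [Set.mem_setOf_eq, not_le] at hgt
        have hcase : (w:ℕ) = m+1 ∨ (w:ℕ) = m+2 ∨ m+3 ≤ (w:ℕ) := by omega
        rcases hcase with h | h | h
        · exact hw' (by rw [show w = a from Fin.ext (by omega)]; exact hza)
        · exact hw' (by rw [show w = b from Fin.ext (by omega)]; exact hzb)
        · exact hw' (C1 w h)
      · -- GC case
        have hzi : ∀ i : Fin (n+1), 1 ≤ (i:ℕ) → (i:ℕ) ≤ m+1 → σ i = 0 :=
          fun i p q => (C4 i p q).resolve_right hzb
        have hexp : σ = Finsupp.single 0 (σ 0) + Finsupp.single b (σ b) := by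
          ext w
          rw [vval _ _ _ _ _ h0b]
          by_cases e0 : (0 : Fin (n+1)) = w
          · rw [if_pos e0, ← e0]
          · rw [if_neg e0]
            by_cases eb : b = w
            · rw [if_pos eb, ← eb]
            · rw [if_neg eb]
              have hw1 : 1 ≤ (w:ℕ) := by
                rcases Nat.eq_zero_or_pos (w:ℕ) with h | h
                · exact absurd (Fin.ext (by rw [Fin.val_zero]; omega)) e0
                · exact h
              have hcase : (w:ℕ) ≤ m+1 ∨ (w:ℕ) = m+2 ∨ m+3 ≤ (w:ℕ) := by omega
              rcases hcase with h | h | h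
              · exact hzi w hw1 h
              · exact absurd (Fin.ext (by omega : (b:ℕ) = (w:ℕ))) eb
              · exact C1 w h
        have hdd : σ 0 + σ b = d := by
          rw [hexp, degree_add', degree_single', degree_single'] at h1
          exact h1
        right
        refine ⟨σ b, Set.mem_Icc.2 ⟨by omega, by omega⟩, ?_⟩
        show Finsupp.single (0 : Fin (n+1)) (d - σ b) + Finsupp.single b (σ b) = σ
        rw [show d - σ b = σ 0 by omega]
        exact hexp.symm
    · -- GB case
      have h1a : σ a = 1 := by omega
      have hzb : σ b = 0 := by
        rcases C4 a (by omega) (by omega) with h | h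
        · exact absurd h hza
        · exact h
      have hzi : ∀ i : Fin (n+1), 1 ≤ (i:ℕ) → (i:ℕ) ≤ m → σ i = 0 :=
        fun i p q => (C3 i p q).resolve_right hza
      have hexp : σ = Finsupp.single 0 (σ 0) + Finsupp.single a 1 := by
        ext w
        rw [vval _ _ _ _ _ h0a]
        by_cases e0 : (0 : Fin (n+1)) = w
        · rw [if_pos e0, ← e0]
        · rw [if_neg e0]
          by_cases ea : a = w
          · rw [if_pos ea, ← ea, h1a]
          · rw [if_neg ea]
            have hw1 : 1 ≤ (w:ℕ) := by
              rcases Nat.eq_zero_or_pos (w:ℕ) with h | h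
              · exact absurd (Fin.ext (by rw [Fin.val_zero]; omega)) e0
              · exact h
            have hcase : (w:ℕ) ≤ m ∨ (w:ℕ) = m+1 ∨ (w:ℕ) = m+2 ∨ m+3 ≤ (w:ℕ) := by
              omega
            rcases hcase with h | h | h | h
            · exact hzi w hw1 h
            · exact absurd (Fin.ext (by omega : (a:ℕ) = (w:ℕ))) ea
            · exact (by rw [show w = b from Fin.ext (by omega)]; exact hzb)
            · exact C1 w h
      have hdd : σ 0 + 1 = d := by
        rw [hexp, degree_add', degree_single', degree_single'] at h1
        exact h1
      left; right
      show σ = Finsupp.single 0 (d-1) + Finsupp.single a 1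
      rw [hexp, show σ 0 = d - 1 by omega]

end

lemma T_finite (N d : ℕ) : {σ : Fin N →₀ ℕ | σ.degree = d}.Finite :=
  (Finsupp.finite_of_degree_le d).subset (fun _ h => le_of_eq h)

lemma T_ncard (N d : ℕ) :
    {σ : Fin (N+1) →₀ ℕ | σ.degree = d}.ncard = (d+N).choose N := by
  rw [← Nat.card_coe_set_eq]
  have : Nat.card ↥{σ : Fin (N+1) →₀ ℕ | σ.degree = d}
      = Nat.card {σ : Fin (N+1) →₀ ℕ // σ.degree = d} := rfl
  rw [this, count_degree (Fin (N+1)) d]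
  simp only [Nat.card_eq_fintype_card, Fintype.card_fin]
  rw [show N + 1 + d - 1 = N + d by omega]
  rw [← Nat.choose_symm (by omega : d ≤ N + d), show N + d - d = N by omega,
    Nat.add_comm N d]

section
variable {n m d : ℕ} {a b : Fin (n+1)}

lemma good_ncard (hm : 1 ≤ m) (hn : m+2 ≤ n) (hd : 1 ≤ d)
    (ha : (a:ℕ) = m+1) (hb : (b:ℕ) = m+2) :
    (GoodSet n m d a b).ncard = (d+m).choose m + d + 1 := by
  classical
  have h0a : (0 : Fin (n+1)) ≠ a := fun e => by
    rw [Fin.ext_iff, Fin.val_zero] at e; omega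
  have h0b : (0 : Fin (n+1)) ≠ b := fun e => by
    rw [Fin.ext_iff, Fin.val_zero] at e; omega
  set GA : Set (Fin (n+1) →₀ ℕ) :=
    {σ : Fin (n+1) →₀ ℕ | σ.degree = d ∧ ↑σ.support ⊆ {i : Fin (n+1) | (i : ℕ) ≤ m}}
    with hGA
  set GB : Set (Fin (n+1) →₀ ℕ) := {Finsupp.single 0 (d-1) + Finsupp.single a 1} with hGB
  set GC : Set (Fin (n+1) →₀ ℕ) :=
    (fun j => Finsupp.single (0 : Fin (n+1)) (d-j) + Finsupp.single b j) '' Set.Icc 1 d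
    with hGC
  -- finiteness
  have hGAfin : GA.Finite := (T_finite (n+1) d).subset (fun σ hσ => hσ.1)
  have hGBfin : GB.Finite := Set.finite_singleton _
  have hGCfin : GC.Finite := (Set.finite_Icc 1 d).image _
  -- values
  have hvGB : ∀ σ ∈ GB, σ a = 1 ∧ σ b = 0 := by
    rintro σ rfl
    rw [vval _ _ _ _ _ h0a, vval _ _ _ _ _ h0a, if_neg h0a, if_pos rfl, if_neg, if_neg]
    · exact ⟨rfl, rfl⟩
    · exact fun e => by rw [Fin.ext_iff] at e; omega
    · exact fun e => by rw [Fin.ext_iff, Fin.val_zero] at e; omega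
  have hvGC : ∀ σ ∈ GC, σ a = 0 ∧ 1 ≤ σ b := by
    rintro σ ⟨j, hj, rfl⟩
    rw [Set.mem_Icc] at hj
    rw [vval _ _ _ _ _ h0b, vval _ _ _ _ _ h0b, if_neg h0b, if_pos rfl, if_neg, if_neg]
    · exact ⟨rfl, hj.1⟩
    · exact fun e => by rw [Fin.ext_iff] at e; omega
    · exact fun e => by rw [Fin.ext_iff, Fin.val_zero] at e; omega
  have hvGA : ∀ σ ∈ GA, σ a = 0 ∧ σ b = 0 := by
    rintro σ ⟨_, hsup⟩
    constructor <;>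
    · by_contra hzz
      have := hsup (Finsupp.mem_support_iff.2 hzz)
      simp only [Set.mem_setOf_eq] at this
      omega
  -- disjointness
  have dAB : Disjoint GA GB := Set.disjoint_left.2 fun σ hA hB => by
    have := (hvGA σ hA).1; have := (hvGB σ hB).1; omega
  have dAC : Disjoint GA GC := Set.disjoint_left.2 fun σ hA hC => by
    have := (hvGA σ hA).2; have := (hvGC σ hC).2; omega
  have dBC : Disjoint GB GC := Set.disjoint_left.2 fun σ hB hC => by
    have := (hvGB σ hB).1; have := (hvGC σ hC).1; omega
  have dABC : Disjoint (GA ∪ GB) GC := Set.disjoint_union_left.2 ⟨dAC, dBC⟩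
  -- cards
  have cGA : GA.ncard = (d+m).choose m := by
    rw [← Nat.card_coe_set_eq]
    have : Nat.card ↥GA = Nat.card {σ : Fin (n+1) →₀ ℕ //
        σ.degree = d ∧ ↑σ.support ⊆ {i : Fin (n+1) | (i : ℕ) ≤ m}} := rfl
    rw [this, count_supported (n+1) (m+1) d _ ?_]
    · rw [show m + 1 + d - 1 = m + d by omega]
      rw [← Nat.choose_symm (by omega : d ≤ m + d), show m + d - d = m by omega,
        Nat.add_comm m d]
    · -- Nat.card {i : Fin (n+1) | (i:ℕ) ≤ m} = m+1
      have e3 : {i : Fin (n+1) | (i : ℕ) ≤ m} ≃ Fin (m+1) :=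
      { toFun := fun x => ⟨(x.1 : ℕ), by have := x.2; simp only [Set.mem_setOf_eq] at this; omega⟩
        invFun := fun y => ⟨⟨(y : ℕ), by omega⟩, by simp only [Set.mem_setOf_eq]; omega⟩
        left_inv := fun x => by apply Subtype.ext; apply Fin.ext; rfl
        right_inv := fun y => by apply Fin.ext; rfl }
      rw [Nat.card_congr e3, Nat.card_eq_fintype_card, Fintype.card_fin]
  have cGB : GB.ncard = 1 := Set.ncard_singleton _
  have cGC : GC.ncard = d := by
    rw [hGC, Set.ncard_image_of_injOn, ← Finset.coe_Icc, Set.ncard_coe_finset, Nat.card_Icc]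
    · omega
    · intro j1 h1 j2 h2 e
      have := congrArg (fun σ : Fin (n+1) →₀ ℕ => σ b) e
      simp only at this
      rw [vval _ _ _ _ _ h0b, vval _ _ _ _ _ h0b, if_neg h0b, if_pos rfl, if_neg h0b,
        if_pos rfl] at this
      exact this
  show ((GA ∪ GB) ∪ GC).ncard = (d+m).choose m + d + 1
  rw [Set.ncard_union_eq dABC (hGAfin.union hGBfin) hGCfin,
    Set.ncard_union_eq dAB hGAfin hGBfin, cGA, cGB, cGC]
  omega

end


set_option maxHeartbeats 2000000 in
set_option synthInstance.maxHeartbeats 400000 in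
/-- The `(m+2)`-dimensional sundial imposes `C(d+m,m) + d + 1` conditions on the
forms of each degree `d ≥ 1`. -/
theorem stmt7 (k : Type) [Field k] (n m d : ℕ) (hm : 1 ≤ m) (hn : m + 2 ≤ n)
    (hd : 1 ≤ d)
    (I : Ideal (MvPolynomial (Fin (n+1)) k))
    (hI : I = (Ideal.span
          (MvPolynomial.X '' {i : Fin (n+1) | 1 ≤ (i : ℕ) ∧ (i : ℕ) ≤ m + 1})
            : Ideal (MvPolynomial (Fin (n+1)) k))
          * Ideal.span {MvPolynomial.X (⟨m+1, by omega⟩ : Fin (n+1)),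
              MvPolynomial.X (⟨m+2, by omega⟩ : Fin (n+1))}
        + Ideal.span (MvPolynomial.X '' {i : Fin (n+1) | m + 3 ≤ (i : ℕ)})) :
    Module.finrank k
        ↥((MvPolynomial.homogeneousSubmodule (Fin (n+1)) k d).map
          (Ideal.Quotient.mkₐ k I).toLinearMap)
      = (d+m).choose m + d + 1 ∧
    (hdim k (n+1) I d : ℤ)
      = ((d+n).choose n : ℤ) - ((d+m).choose m : ℤ) - (d+1) := by
  classical
  set a : Fin (n+1) := ⟨m+1, by omega⟩ with haa
  set b : Fin (n+1) := ⟨m+2, by omega⟩ with hbb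
  have ha : (a : ℕ) = m+1 := rfl
  have hb : (b : ℕ) = m+2 := rfl
  have hIrepr : I = Ideal.span (Mo k (n+1) '' Sgen n m a b) := by
    rw [hI]; exact ideal_repr k n m a b
  set T : Set (Fin (n+1) →₀ ℕ) := {σ | σ.degree = d} with hT
  set Bset : Set (Fin (n+1) →₀ ℕ) := {σ | σ.degree = d ∧ ∃ s ∈ Sgen n m a b, s ≤ σ}
    with hBset
  set G : Set (Fin (n+1) →₀ ℕ) := GoodSet n m d a b with hG
  have hGsubT : G ⊆ T := good_sub hd ha hb
  have hGfin : G.Finite := (T_finite (n+1) d).subset hGsubT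
  have hBdiff : Bset = T \ G := bad_eq_diff hm hn hd ha hb
  have hBfin : Bset.Finite := (T_finite (n+1) d).subset (fun σ h => h.1)
  have hGle : G.ncard ≤ T.ncard := Set.ncard_le_ncard hGsubT (T_finite (n+1) d)
  have hBcard : Bset.ncard = T.ncard - G.ncard := by
    rw [hBdiff, Set.ncard_diff hGsubT hGfin]
  have hTcard : T.ncard = (d+n).choose n := T_ncard n d
  have hGcard : G.ncard = (d+m).choose m + d + 1 := good_ncard hm hn hd ha hb
  -- the submodule identity
  have hsubmod : Submodule.restrictScalars k
        (I : Submodule (MvPolynomial (Fin (n+1)) k) (MvPolynomial (Fin (n+1)) k))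
      ⊓ MvPolynomial.homogeneousSubmodule (Fin (n+1)) k d
      = (AddMonoidAlgebra.supported k k Bset : Submodule k (MvPolynomial (Fin (n+1)) k)) := by
    have hMo : Mo k (n+1) = fun s => monomial s (1:k) := rfl
    ext f
    simp only [Submodule.mem_inf, Submodule.restrictScalars_mem,
      homogeneousSubmodule_eq_finsupp_supported, AddMonoidAlgebra.mem_supported]
    rw [hIrepr, hMo, MvPolynomial.mem_ideal_span_monomial_image]
    constructor
    · rintro ⟨hbad, hdeg⟩ σ hσ
      exact ⟨hdeg hσ, hbad σ hσ⟩
    · intro h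
      exact ⟨fun σ hσ => (h hσ).2, fun σ hσ => (h hσ).1⟩
  have hdimval : hdim k (n+1) I d = T.ncard - G.ncard := by
    unfold hdim
    rw [hsubmod, ← hBcard]
    exact finrank_supported k (n+1) Bset hBfin
  -- rank nullity
  set p : Submodule k (MvPolynomial (Fin (n+1)) k) :=
    MvPolynomial.homogeneousSubmodule (Fin (n+1)) k d with hp
  have hpT : p = (AddMonoidAlgebra.supported k k T : Submodule k (MvPolynomial (Fin (n+1)) k)) :=
    homogeneousSubmodule_eq_finsupp_supported (Fin (n+1)) k d
  have hfinp : Module.finrank k ↥p = T.ncard := by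
    rw [hpT]
    exact finrank_supported k (n+1) T (T_finite (n+1) d)
  haveI hfd0 : FiniteDimensional k
      ↥(AddMonoidAlgebra.supported k k T : Submodule k (MvPolynomial (Fin (n+1)) k)) := by
    haveI := (T_finite (n+1) d).fintype
    exact Module.Finite.equiv (AddMonoidAlgebra.supportedEquivFinsupp (S := k) (R := k) T).symm
  haveI hfd : FiniteDimensional k ↥p := hpT ▸ hfd0
  set f : MvPolynomial (Fin (n+1)) k →ₗ[k] MvPolynomial (Fin (n+1)) k ⧸ I :=
    (Ideal.Quotient.mkₐ k I).toLinearMap with hf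
  have hker : LinearMap.ker f = Submodule.restrictScalars k
      (I : Submodule (MvPolynomial (Fin (n+1)) k) (MvPolynomial (Fin (n+1)) k)) := by
    ext x
    simp only [hf, LinearMap.mem_ker, AlgHom.toLinearMap_apply, Ideal.Quotient.mkₐ_eq_mk,
      Submodule.restrictScalars_mem]
    exact Ideal.Quotient.eq_zero_iff_mem
  set g : ↥p →ₗ[k] MvPolynomial (Fin (n+1)) k ⧸ I := f ∘ₗ p.subtype with hg
  have hrange : LinearMap.range g = p.map f := by
    rw [hg, LinearMap.range_comp, Submodule.range_subtype]
  have hkerg : LinearMap.ker g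
      = Submodule.comap p.subtype (Submodule.restrictScalars k
          (I : Submodule (MvPolynomial (Fin (n+1)) k) (MvPolynomial (Fin (n+1)) k)) ⊓ p) := by
    rw [hg, LinearMap.ker_comp, hker]
    ext x
    simp only [Submodule.mem_comap, Submodule.mem_inf, Submodule.coe_subtype]
    exact ⟨fun h => ⟨h, x.2⟩, fun h => h.1⟩
  have ekg : ↥(LinearMap.ker g) ≃ₗ[k]
      ↥(Submodule.restrictScalars k
          (I : Submodule (MvPolynomial (Fin (n+1)) k) (MvPolynomial (Fin (n+1)) k)) ⊓ p) :=
    hkerg ▸ Submodule.comapSubtypeEquivOfLe inf_le_right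
  have hkerrank : Module.finrank k ↥(LinearMap.ker g) = T.ncard - G.ncard := by
    have h1 : Module.finrank k ↥(LinearMap.ker g)
        = Module.finrank k ↥(Submodule.restrictScalars k
          (I : Submodule (MvPolynomial (Fin (n+1)) k) (MvPolynomial (Fin (n+1)) k)) ⊓ p) :=
      LinearEquiv.finrank_eq ekg
    rw [h1]
    have : Submodule.restrictScalars k
        (I : Submodule (MvPolynomial (Fin (n+1)) k) (MvPolynomial (Fin (n+1)) k)) ⊓ p
        = (AddMonoidAlgebra.supported k k Bset : Submodule k (MvPolynomial (Fin (n+1)) k)) := hsubmod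
    rw [this, ← hBcard]
    exact finrank_supported k (n+1) Bset hBfin
  have hrn := LinearMap.finrank_range_add_finrank_ker g
  rw [hrange, hkerrank, hfinp] at hrn
  constructor
  · have : (p.map f) = ((MvPolynomial.homogeneousSubmodule (Fin (n+1)) k d).map
        (Ideal.Quotient.mkₐ k I).toLinearMap) := rfl
    rw [← this]
    omega
  · have hc : (hdim k (n+1) I d : ℤ) = (T.ncard : ℤ) - (G.ncard : ℤ) := by
      rw [hdimval, Nat.cast_sub hGle]
    rw [hc, hTcard, hGcard]
    push_cast
    ring
end
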